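/- If a flow on a compact metric space Λ has the weak specification property, then Λ contains no attracting critical orbit and no repelling critical orbit (no sinks or sources), provided Λ is not a single critical orbit. -/
import Mathlib


open Filter Set Metric TensorProduct

section Defs
variable {M : Type*}

/-- A continuous flow on a topological space. -/
def IsFlow [TopologicalSpace M] (φ : ℝ → M → M) : Prop :=
  Continuous (fun p : ℝ × M => φ p.1 p.2) ∧ (∀ x, φ 0 x = x) ∧
    ∀ s t x, φ (s + t) x = φ s (φ t x)

def InvariantSet (φ : ℝ → M → M) (Λ : Set M) : Prop :=
  ∀ t : ℝ, ∀ x ∈ Λ, φ t x ∈ Λ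

def orbitOf (φ : ℝ → M → M) (p : M) : Set M := Set.range fun t : ℝ => φ t p

/-- A critical point: singularity or periodic point. -/
def IsCriticalPt (φ : ℝ → M → M) (p : M) : Prop := ∃ T : ℝ, 0 < T ∧ φ T p = p

/-- `K` is a spacing constant for `ε`: any `K`-spaced weak specification
(two orbit segments of points of `Λ`, parametrized over `[a₁,b₁]` and `[a₂,b₂]`
with `a₂ ≥ b₁ + K`) is `ε`-shadowed by a point of `Λ`. -/
def SpecConst [MetricSpace M] (φ : ℝ → M → M) (Λ : Set M) (ε K : ℝ) : Prop :=
  ∀ a₁ b₁ a₂ b₂ : ℝ, a₁ ≤ b₁ → a₂ ≤ b₂ → b₁ + K ≤ a₂ →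
    ∀ x ∈ Λ, ∀ y ∈ Λ, ∃ z ∈ Λ,
      (∀ t ∈ Set.Icc a₁ b₁, dist (φ t z) (φ (t - a₁) x) < ε) ∧
      (∀ t ∈ Set.Icc a₂ b₂, dist (φ t z) (φ (t - a₂) y) < ε)

/-- The weak specification property on `Λ`. -/
def WeakSpec [MetricSpace M] (φ : ℝ → M → M) (Λ : Set M) : Prop :=
  ∀ ε : ℝ, 0 < ε → ∃ K : ℝ, 0 < K ∧ SpecConst φ Λ ε K

/-- Topological mixing of the flow restricted to `Λ`. -/
def TopMixingOn [TopologicalSpace M] (φ : ℝ → M → M) (Λ : Set M) : Prop :=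
  ∀ U V : Set M, IsOpen U → IsOpen V → (U ∩ Λ).Nonempty → (V ∩ Λ).Nonempty →
    ∃ N : ℝ, 0 < N ∧ ∀ t : ℝ, N ≤ t → (φ t '' (V ∩ Λ) ∩ (U ∩ Λ)).Nonempty

/-- Topological transitivity of the flow restricted to `Λ`. -/
def TopTransOn [TopologicalSpace M] (φ : ℝ → M → M) (Λ : Set M) : Prop :=
  ∀ U V : Set M, IsOpen U → IsOpen V → (U ∩ Λ).Nonempty → (V ∩ Λ).Nonempty →
    ∃ t : ℝ, 0 < t ∧ (φ t '' (V ∩ Λ) ∩ (U ∩ Λ)).Nonempty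

/-- The stable set `W^s(σ)` of a point (e.g. a singularity). -/
def WsPoint [TopologicalSpace M] (φ : ℝ → M → M) (σ : M) : Set M :=
  {y | Filter.Tendsto (fun t : ℝ => φ t y) Filter.atTop (nhds σ)}

/-- The unstable set `W^u(σ)` of a point (e.g. a singularity). -/
def WuPoint [TopologicalSpace M] (φ : ℝ → M → M) (σ : M) : Set M :=
  {y | Filter.Tendsto (fun t : ℝ => φ t y) Filter.atBot (nhds σ)}

/-- The strong stable set `W^{ss}(p)`. -/
def Wss [MetricSpace M] (φ : ℝ → M → M) (p : M) : Set M :=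
  {y | Filter.Tendsto (fun t : ℝ => dist (φ t y) (φ t p)) Filter.atTop (nhds 0)}

/-- The strong unstable set `W^{uu}(p)`. -/
def Wuu [MetricSpace M] (φ : ℝ → M → M) (p : M) : Set M :=
  {y | Filter.Tendsto (fun t : ℝ => dist (φ t y) (φ t p)) Filter.atBot (nhds 0)}

/-- The stable set of the orbit of `p`: `W^s(O(p)) = ⋃_t W^{ss}(X_t(p))`. -/
def WsOrb [MetricSpace M] (φ : ℝ → M → M) (p : M) : Set M := ⋃ s : ℝ, Wss φ (φ s p)

/-- The unstable set of the orbit of `p`. -/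
def WuOrb [MetricSpace M] (φ : ℝ → M → M) (p : M) : Set M := ⋃ s : ℝ, Wuu φ (φ s p)

end Defs

section VF
variable {E : Type*} [NormedAddCommGroup E] [NormedSpace ℝ E]

/-- `φ` is the flow generated by the vector field `X`. -/
def GeneratedBy (X : E → E) (φ : ℝ → E → E) : Prop :=
  (∀ x, φ 0 x = x) ∧ (∀ s t x, φ (s + t) x = φ s (φ t x)) ∧
    ∀ x t, HasDerivAt (fun s => φ s x) (X (φ t x)) t

/-- The complexification of a continuous real-linear endomorphism. -/
noncomputable def cxEnd (A : E →L[ℝ] E) : Module.End ℂ (ℂ ⊗[ℝ] E) :=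
  (A : E →ₗ[ℝ] E).baseChange ℂ

/-- A hyperbolic singularity: `X σ = 0` and no eigenvalue of `DX(σ)` has zero real part. -/
def HypSing (X : E → E) (σ : E) : Prop :=
  X σ = 0 ∧ ∀ μ ∈ spectrum ℂ (cxEnd (fderiv ℝ X σ)), μ.re ≠ 0

/-- A hyperbolic periodic point: a regular point of period `T > 0` such that no
characteristic multiplier (eigenvalue of `Dφ_T(p)` other than the simple eigenvalue `1`
coming from the flow direction) lies on the unit circle. -/
def HypPeriodic (X : E → E) (φ : ℝ → E → E) (p : E) : Prop :=
  X p ≠ 0 ∧ ∃ T : ℝ, 0 < T ∧ φ T p = p ∧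
    (∀ μ ∈ spectrum ℂ (cxEnd (fderiv ℝ (φ T) p)), μ = 1 ∨ ‖μ‖ ≠ 1) ∧
    Module.finrank ℂ (Module.End.maxGenEigenspace (cxEnd (fderiv ℝ (φ T) p)) 1) = 1

/-- A hyperbolic critical element: hyperbolic singularity or hyperbolic periodic point. -/
def HypCritical (X : E → E) (φ : ℝ → E → E) (p : E) : Prop :=
  HypSing X p ∨ HypPeriodic X φ p

/-- A hyperbolic periodic orbit of saddle type: it has characteristic multipliers both
inside and outside the unit circle. -/
def IsSaddlePeriodic (X : E → E) (φ : ℝ → E → E) (p : E) : Prop :=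
  X p ≠ 0 ∧ ∃ T : ℝ, 0 < T ∧ φ T p = p ∧
    (∃ μ ∈ spectrum ℂ (cxEnd (fderiv ℝ (φ T) p)), ‖μ‖ < 1) ∧
    (∃ μ ∈ spectrum ℂ (cxEnd (fderiv ℝ (φ T) p)), 1 < ‖μ‖)

/-- `Crit(X)`: singularities together with periodic points. -/
def CritSet (X : E → E) (φ : ℝ → E → E) : Set E :=
  {x | X x = 0 ∨ ∃ T : ℝ, 0 < T ∧ φ T x = x}

/-- `PO(X)`: the (regular) periodic points. -/
def PerPts (X : E → E) (φ : ℝ → E → E) : Set E :=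
  {x | X x ≠ 0 ∧ ∃ T : ℝ, 0 < T ∧ φ T x = x}

end VF

/-- A sink (attracting critical orbit): the orbit of a critical point `p` admitting an
open neighborhood `U` which is forward invariant and whose forward intersection is
exactly the orbit. -/
def IsSinkOrbit {M : Type*} [TopologicalSpace M] (φ : ℝ → M → M) (p : M) : Prop :=
  ∃ U : Set M, IsOpen U ∧ orbitOf φ p ⊆ U ∧ (∀ t : ℝ, 0 ≤ t → φ t '' U ⊆ U) ∧
    (⋂ t : ℝ, ⋂ _ : 0 ≤ t, φ t '' U) = orbitOf φ p

/-- A source (repelling critical orbit): a sink for the time-reversed flow. -/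
def IsSourceOrbit {M : Type*} [TopologicalSpace M] (φ : ℝ → M → M) (p : M) : Prop :=
  ∃ U : Set M, IsOpen U ∧ orbitOf φ p ⊆ U ∧ (∀ t : ℝ, t ≤ 0 → φ t '' U ⊆ U) ∧
    (⋂ t : ℝ, ⋂ _ : t ≤ 0, φ t '' U) = orbitOf φ p

section NoSink

variable {M : Type*} [MetricSpace M] [CompactSpace M]

private lemma flow_comp {φ : ℝ → M → M} (hflow : IsFlow φ) (s t : ℝ) (x : M) :
    φ s (φ t x) = φ (s + t) x := (hflow.2.2 s t x).symm

private lemma orbit_compact {φ : ℝ → M → M} (hflow : IsFlow φ) {p : M} {T : ℝ}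
    (hT : 0 < T) (hpT : φ T p = p) : IsCompact (orbitOf φ p) := by
  have hcont : Continuous fun t : ℝ => φ t p :=
    hflow.1.comp (continuous_id.prodMk continuous_const)
  have hper : Function.Periodic (fun t : ℝ => φ t p) T := by
    intro t
    simp only
    rw [hflow.2.2 t T p, hpT]
  have horb : orbitOf φ p = (fun t : ℝ => φ t p) '' Set.Icc 0 T := by
    apply Set.Subset.antisymm
    · rintro x ⟨t, rfl⟩
      obtain ⟨y, hy, hxy⟩ := hper.exists_mem_Ico₀ hT t
      exact ⟨y, ⟨hy.1, hy.2.le⟩, hxy.symm⟩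
    · rintro x ⟨t, -, rfl⟩
      exact ⟨t, rfl⟩
  rw [horb]
  exact (isCompact_Icc.image hcont)

private lemma no_sink (φ : ℝ → M → M) (hflow : IsFlow φ) (hspec : WeakSpec φ Set.univ)
    (p : M) (hcrit : IsCriticalPt φ p) (hne : (Set.univ : Set M) ≠ orbitOf φ p) :
    ¬ IsSinkOrbit φ p := by
  obtain ⟨T, hT, hpT⟩ := hcrit
  rintro ⟨U, hUopen, horbU, hfwd, hInter⟩
  set O := orbitOf φ p with hO
  have hOc : IsCompact O := orbit_compact hflow hT hpT
  have hOne : O.Nonempty := ⟨p, ⟨0, hflow.2.1 p⟩⟩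
  -- a point off the orbit
  obtain ⟨q, hq⟩ : ∃ q, q ∉ O := by
    by_contra h
    push_neg at h
    exact hne (Set.eq_univ_of_forall h).symm
  have hδ : 0 < Metric.infDist q O := (hOc.isClosed.notMem_iff_infDist_pos hOne).1 hq
  obtain ⟨δ', hδ'pos, hδ'U⟩ := hOc.exists_thickening_subset_open hUopen horbU
  set ε : ℝ := min (δ' / 2) (Metric.infDist q O / 2) with hε
  have hεpos : 0 < ε := lt_min (by linarith) (by linarith)
  obtain ⟨K, hKpos, hSpec⟩ := hspec ε hεpos
  -- shadowing points
  have hz : ∀ n : ℕ, ∃ z : M,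
      (∀ t ∈ Set.Icc (-(n : ℝ)) 0, dist (φ t z) (φ (t + n) p) < ε) ∧
      dist (φ K z) q < ε := by
    intro n
    obtain ⟨z, -, h1, h2⟩ := hSpec (-(n : ℝ)) 0 K K (neg_nonpos.mpr (Nat.cast_nonneg n)) le_rfl (by linarith)
      p (Set.mem_univ p) q (Set.mem_univ q)
    refine ⟨z, fun t ht => ?_, ?_⟩
    · have := h1 t ht
      rwa [sub_neg_eq_add] at this
    · have := h2 K ⟨le_rfl, le_rfl⟩
      rwa [sub_self, hflow.2.1] at this
  choose z hz1 hz2 using hz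
  obtain ⟨ζ, σ, hσ, hlim⟩ := CompactSpace.tendsto_subseq z
  -- the limit shadows the whole backward orbit
  have key1 : ∀ t : ℝ, t ≤ 0 → Metric.infDist (φ t ζ) O ≤ ε := by
    intro t ht
    have hc : Tendsto (fun k => φ t (z (σ k))) atTop (nhds (φ t ζ)) :=
      ((hflow.1.comp (continuous_const.prodMk continuous_id)).tendsto ζ).comp hlim
    have hc2 : Tendsto (fun k => Metric.infDist (φ t (z (σ k))) O) atTop
        (nhds (Metric.infDist (φ t ζ) O)) :=
      ((Metric.continuous_infDist_pt O).tendsto _).comp hc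
    refine le_of_tendsto hc2 ?_
    have hev : ∀ᶠ k in atTop, -((σ k : ℕ) : ℝ) ≤ t := by
      filter_upwards [eventually_ge_atTop ⌈-t⌉₊] with k hk
      have h1 : -t ≤ (⌈-t⌉₊ : ℝ) := Nat.le_ceil _
      have h2 : (⌈-t⌉₊ : ℝ) ≤ (σ k : ℝ) := by
        exact_mod_cast le_trans hk (hσ.le_apply)
      linarith
    filter_upwards [hev] with k hk
    have hdist := hz1 (σ k) t ⟨hk, ht⟩
    have hmem : φ (t + (σ k : ℕ)) p ∈ O := ⟨t + (σ k : ℕ), rfl⟩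
    exact (Metric.infDist_le_dist_of_mem hmem).trans hdist.le
  have key2 : dist (φ K ζ) q ≤ ε := by
    have hc : Tendsto (fun k => dist (φ K (z (σ k))) q) atTop (nhds (dist (φ K ζ) q)) := by
      have : Tendsto (fun k => φ K (z (σ k))) atTop (nhds (φ K ζ)) :=
        ((hflow.1.comp (continuous_const.prodMk continuous_id)).tendsto ζ).comp hlim
      exact (Continuous.dist continuous_id continuous_const).continuousAt.tendsto.comp this
    exact le_of_tendsto hc (Eventually.of_forall fun k => (hz2 (σ k)).le)
  -- hence the backward orbit of ζ stays in U
  have hUmem : ∀ t : ℝ, t ≤ 0 → φ t ζ ∈ U := by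
    intro t ht
    apply hδ'U
    rw [Metric.mem_thickening_iff]
    have h1 : Metric.infDist (φ t ζ) O < δ' :=
      lt_of_le_of_lt (key1 t ht) (lt_of_le_of_lt (min_le_left _ _) (by linarith))
    exact (Metric.infDist_lt_iff hOne).1 h1
  have hζU : ζ ∈ U := by
    have := hUmem 0 le_rfl
    rwa [hflow.2.1] at this
  -- φ K ζ is in the whole forward intersection, hence on the orbit
  have hw : φ K ζ ∈ O := by
    rw [← hInter]
    refine Set.mem_iInter.mpr fun t => Set.mem_iInter.mpr fun htpos => ?_
    refine ⟨φ (K - t) ζ, ?_, ?_⟩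
    · rcases le_or_gt (K - t) 0 with h | h
      · exact hUmem _ h
      · exact hfwd (K - t) h.le ⟨ζ, hζU, rfl⟩
    · rw [flow_comp hflow, show t + (K - t) = K by ring]
  have : Metric.infDist q O ≤ ε := by
    have := Metric.infDist_le_dist_of_mem (x := q) hw
    rw [dist_comm] at key2
    linarith
  have : ε ≤ Metric.infDist q O / 2 := min_le_right _ _
  linarith

end NoSink


/-- If a flow on a compact metric space (not reduced to a single critical
orbit) has the weak specification property, then it has no sinks and no sources. -/
theorem weak_specification_no_sinks_no_sources
    {M : Type*} [MetricSpace M] [CompactSpace M] [Nonempty M]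
    (φ : ℝ → M → M) (hflow : IsFlow φ) (hspec : WeakSpec φ Set.univ)
    (hnotsingleorbit : ∀ p : M, IsCriticalPt φ p → (Set.univ : Set M) ≠ orbitOf φ p) :
    ∀ p : M, IsCriticalPt φ p → ¬ IsSinkOrbit φ p ∧ ¬ IsSourceOrbit φ p := by
  intro p hcrit
  constructor
  · exact no_sink φ hflow hspec p hcrit (hnotsingleorbit p hcrit)
  · -- reverse the flow
    set ψ : ℝ → M → M := fun t x => φ (-t) x with hψ
    have hψflow : IsFlow ψ := by
      refine ⟨?_, fun x => by simp only [hψ, neg_zero, hflow.2.1], fun s t x => ?_⟩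
      · exact hflow.1.comp ((continuous_fst.neg).prodMk continuous_snd)
      · simp only [hψ, neg_add]
        exact hflow.2.2 (-s) (-t) x
    have hrev : ∀ s : ℝ, ∀ x : M, φ s (φ (-s) x) = x := by
      intro s x
      rw [(hflow.2.2 s (-s) x).symm, add_neg_cancel, hflow.2.1]
    have hψspec : WeakSpec ψ Set.univ := by
      intro ε hε
      obtain ⟨K, hKpos, hsp⟩ := hspec ε hε
      refine ⟨K, hKpos, ?_⟩
      intro a₁ b₁ a₂ b₂ h1 h2 h3 x _ y _
      obtain ⟨w, -, hA, hB⟩ := hsp (-b₂) (-a₂) (-b₁) (-a₁) (by linarith) (by linarith)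
        (by linarith) (φ (a₂ - b₂) y) (Set.mem_univ _) (φ (a₁ - b₁) x) (Set.mem_univ _)
      refine ⟨w, Set.mem_univ _, fun t ht => ?_, fun t ht => ?_⟩
      · have := hB (-t) ⟨neg_le_neg ht.2, neg_le_neg ht.1⟩
        rwa [show -t - -b₁ = -t + b₁ by ring, (hflow.2.2 (-t + b₁) (a₁ - b₁) x).symm,
          show -t + b₁ + (a₁ - b₁) = -(t - a₁) by ring] at this
      · have := hA (-t) ⟨neg_le_neg ht.2, neg_le_neg ht.1⟩
        rwa [show -t - -b₂ = -t + b₂ by ring, (hflow.2.2 (-t + b₂) (a₂ - b₂) y).symm,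
          show -t + b₂ + (a₂ - b₂) = -(t - a₂) by ring] at this
    have hψcrit : IsCriticalPt ψ p := by
      obtain ⟨T, hT, hpT⟩ := hcrit
      refine ⟨T, hT, ?_⟩
      show φ (-T) p = p
      conv_lhs => rw [← hpT]
      rw [(hflow.2.2 (-T) T p).symm, neg_add_cancel, hflow.2.1]
    have horb : orbitOf ψ p = orbitOf φ p := by
      ext x
      constructor
      · rintro ⟨t, rfl⟩; exact ⟨-t, rfl⟩
      · rintro ⟨t, rfl⟩
        exact ⟨-t, by show φ (- -t) p = φ t p; rw [neg_neg]⟩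
    have hψne : (Set.univ : Set M) ≠ orbitOf ψ p := by
      rw [horb]; exact hnotsingleorbit p hcrit
    intro hsource
    apply no_sink ψ hψflow hψspec p hψcrit hψne
    obtain ⟨U, hUopen, horbU, hinv, hint⟩ := hsource
    refine ⟨U, hUopen, by rw [horb]; exact horbU, fun t ht => hinv (-t) (by linarith), ?_⟩
    rw [horb, ← hint]
    ext x
    simp only [Set.mem_iInter]
    constructor
    · intro h t ht
      have := h (-t) (by linarith)
      show x ∈ φ t '' U
      have he : ψ (-t) '' U = φ t '' U := by
        show (fun y => φ (- -t) y) '' U = _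
        rw [neg_neg]
      rwa [he] at this
    · intro h t ht
      exact h (-t) (by linarith)
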